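/- Let X be a geodesic metric space that is δ-hyperbolic with δ > 0, let C ⊆ X be a ρ-separated subset with ρ ≥ 20δ, and fix R with 2 + 2δ ≤ R ≤ ρ/2 − 3δ. Then for any two distinct points p, a ∈ C, the set π_p(a) has diameter at most 4δ in the path metric of X ∖ B_R(p). In particular, axiom (P1) holds for the projection distances {d_p}_{p∈C} with any projection constant θ ≥ 4δ. -/
import Mathlib


open Set

/-- A geodesic from `x` to `y`: an isometric embedding of `[0, dist x y]` with the
prescribed endpoints. -/
def IsGeodesicFrom {X : Type*} [MetricSpace X] (γ : ℝ → X) (x y : X) : Prop :=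
  γ 0 = x ∧ γ (dist x y) = y ∧
    ∀ s ∈ Icc (0:ℝ) (dist x y), ∀ t ∈ Icc (0:ℝ) (dist x y), dist (γ s) (γ t) = |s - t|

/-- A geodesic metric space: every pair of points is joined by a geodesic. -/
def GeodesicMetricSpace (X : Type*) [MetricSpace X] : Prop :=
  ∀ x y : X, ∃ γ : ℝ → X, IsGeodesicFrom γ x y

/-- The Gromov product `(b,c)_a`. -/
noncomputable def gromovProd {X : Type*} [MetricSpace X] (a b c : X) : ℝ :=
  (dist a b + dist a c - dist b c) / 2

/-- `δ`-hyperbolicity via `δ`-thin triangles: two sides of a geodesic triangle issuing from a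
common vertex stay `δ`-close up to the Gromov product (this is exactly the condition that
pairs of points of the triangle with the same image in the comparison tripod are `δ`-close). -/
def DeltaThin (X : Type*) [MetricSpace X] (δ : ℝ) : Prop :=
  ∀ (a b c : X) (γ₁ γ₂ : ℝ → X), IsGeodesicFrom γ₁ a b → IsGeodesicFrom γ₂ a c →
    ∀ t ∈ Icc (0:ℝ) (gromovProd a b c), dist (γ₁ t) (γ₂ t) ≤ δ

/-- A subset `C` is `ρ`-separated if distinct points of `C` are at distance at least `ρ`. -/
def Separated {X : Type*} [MetricSpace X] (C : Set X) (ρ : ℝ) : Prop :=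
  ∀ c ∈ C, ∀ c' ∈ C, c ≠ c' → ρ ≤ dist c c'

open scoped ENNReal

/-- The path metric of `X ∖ B_R(p)`: the distance from `u` to `v` is the infimum of the
lengths (total variations) of continuous paths from `u` to `v` avoiding the open ball
`B_R(p)`, and `∞` if there is no such path. -/
noncomputable def pathDist {X : Type*} [MetricSpace X] (p : X) (R : ℝ) (u v : X) : ℝ≥0∞ :=
  ⨅ γ ∈ {γ : ℝ → X | ContinuousOn γ (Icc 0 1) ∧ γ 0 = u ∧ γ 1 = v ∧
      ∀ t ∈ Icc (0:ℝ) 1, R ≤ dist (γ t) p},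
    eVariationOn γ (Icc (0:ℝ) 1)

/-- The projection `π_p(a)`: the set of points in which geodesics from `p` to `a` meet the
sphere `S_p = ∂B_R(p)`. -/
def projSet {X : Type*} [MetricSpace X] (p : X) (R : ℝ) (a : X) : Set X :=
  {x : X | dist x p = R ∧
    ∃ γ : ℝ → X, IsGeodesicFrom γ p a ∧ ∃ t ∈ Icc (0:ℝ) (dist p a), γ t = x}

/-- The projection distance `d_p(a,b) = diam(π_p(a) ∪ π_p(b))`, the diameter being taken in
the path metric of `X ∖ B_R(p)`. -/
noncomputable def projDist {X : Type*} [MetricSpace X] (p : X) (R : ℝ) (a b : X) : ℝ≥0∞ :=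
  ⨆ x ∈ projSet p R a ∪ projSet p R b, ⨆ y ∈ projSet p R a ∪ projSet p R b,
    pathDist p R x y

open scoped NNReal

lemma geod_param {X : Type*} [MetricSpace X] {γ : ℝ → X} {x y : X}
    (h : IsGeodesicFrom γ x y) {s : ℝ} (hs : s ∈ Icc (0:ℝ) (dist x y)) :
    dist (γ s) x = s := by
  have h0 := h.2.2 s hs 0 ⟨le_refl _, dist_nonneg⟩
  rw [h.1] at h0
  rw [h0, sub_zero, abs_of_nonneg hs.1]

lemma lip_glue {X : Type*} [MetricSpace X] {K : ℝ≥0} {f : ℝ → X} {a b c : ℝ}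
    (hab : a ≤ b) (hbc : b ≤ c)
    (h1 : LipschitzOnWith K f (Icc a b)) (h2 : LipschitzOnWith K f (Icc b c)) :
    LipschitzOnWith K f (Icc a c) := by
  rw [lipschitzOnWith_iff_dist_le_mul] at h1 h2 ⊢
  have key : ∀ s t, s ∈ Icc a c → t ∈ Icc a c → s ≤ t → dist (f s) (f t) ≤ K * dist s t := by
    intro s t hs ht hst
    rcases le_or_gt t b with h | h
    · exact h1 s ⟨hs.1, hst.trans h⟩ t ⟨hs.1.trans hst, h⟩
    rcases le_or_gt b s with h' | h'
    · exact h2 s ⟨h', hst.trans ht.2⟩ t ⟨h'.trans hst, ht.2⟩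
    calc dist (f s) (f t) ≤ dist (f s) (f b) + dist (f b) (f t) := dist_triangle _ _ _
      _ ≤ K * dist s b + K * dist b t := by
          gcongr
          · exact h1 s ⟨hs.1, h'.le⟩ b ⟨hs.1.trans h'.le, le_refl _⟩
          · exact h2 b ⟨le_refl _, h.le.trans ht.2⟩ t ⟨h.le, ht.2⟩
      _ ≤ K * dist s t := by
          rw [Real.dist_eq, Real.dist_eq, Real.dist_eq, abs_of_nonpos (by linarith),
            abs_of_nonpos (by linarith), abs_of_nonpos (by linarith), ← mul_add]
          gcongr <;> linarith [NNReal.coe_nonneg K]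
  intro s hs t ht
  rcases le_total s t with h | h
  · exact key s t hs ht h
  · rw [dist_comm (f s), dist_comm s]; exact key t s ht hs h

lemma evar_lip {X : Type*} [MetricSpace X] {K : ℝ≥0} {f : ℝ → X}
    (h : LipschitzOnWith K f (Icc 0 1)) :
    eVariationOn f (Icc (0:ℝ) 1) ≤ (K : ℝ≥0∞) := by
  have hid : eVariationOn (id : ℝ → ℝ) (Icc (0:ℝ) 1) ≤ ENNReal.ofReal 1 := by
    have := (monotone_id.monotoneOn (Icc (0:ℝ) 1)).eVariationOn_le
      (a := 0) (b := 1) (by simp) (by simp)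
    simpa using this
  calc eVariationOn f (Icc (0:ℝ) 1) = eVariationOn (f ∘ id) (Icc (0:ℝ) 1) := by
        simp [Function.comp_id]
    _ ≤ K * eVariationOn (id : ℝ → ℝ) (Icc (0:ℝ) 1) :=
        h.comp_eVariationOn_le (mapsTo_id _)
    _ ≤ K * ENNReal.ofReal 1 := by gcongr
    _ = K := by simp

/-- For distinct `p, a ∈ C`, the projection `π_p(a)` has diameter at most `4δ` in the path
metric of `X ∖ B_R(p)`; in particular axiom (P1) holds for the associated projection
distances with any projection constant `θ ≥ 4δ`. -/
theorem statement4 {X : Type*} [MetricSpace X]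
    (δ ρ R : ℝ) (hδ : 0 < δ)
    (hgeo : GeodesicMetricSpace X) (hthin : DeltaThin X δ)
    (C : Set X) (hsep : Separated C ρ) (hρ : 20 * δ ≤ ρ)
    (hR₁ : 2 + 2 * δ ≤ R) (hR₂ : R ≤ ρ / 2 - 3 * δ) :
    ∀ p ∈ C, ∀ a ∈ C, p ≠ a →
      (⨆ x ∈ projSet p R a, ⨆ y ∈ projSet p R a, pathDist p R x y) ≤
          ENNReal.ofReal (4 * δ) ∧
        ∀ θ : ℝ, 4 * δ ≤ θ → projDist p R a a ≤ ENNReal.ofReal θ := by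
  intro p hp a ha hpa
  have hpa' : ρ ≤ dist p a := hsep p hp a ha hpa
  have hRpos : (0:ℝ) < R := by nlinarith
  have hRδ : R + δ ≤ dist p a := by nlinarith
  have key : ∀ x ∈ projSet p R a, ∀ y ∈ projSet p R a,
      pathDist p R x y ≤ ENNReal.ofReal (4 * δ) := by
    rintro x ⟨hx, γ₁, hγ₁, t₁, ht₁, hxt⟩ y ⟨hy, γ₂, hγ₂, t₂, ht₂, hyt⟩
    have hT1 : t₁ = R := by rw [← geod_param hγ₁ ht₁, hxt, hx]
    have hT2 : t₂ = R := by rw [← geod_param hγ₂ ht₂, hyt, hy]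
    have hmemR : R ∈ Icc (0:ℝ) (dist p a) := ⟨hRpos.le, by linarith⟩
    have hmemRδ : R + δ ∈ Icc (0:ℝ) (dist p a) := ⟨by linarith, hRδ⟩
    set u := γ₁ (R + δ) with hu
    set v := γ₂ (R + δ) with hv
    obtain ⟨σ, hσ⟩ := hgeo u v
    set d := dist u v with hd
    have hdδ : d ≤ δ := by
      have : gromovProd p a a = dist p a := by simp [gromovProd, dist_self]
      exact hthin p a a γ₁ γ₂ hγ₁ hγ₂ (R + δ) (by rw [this]; exact hmemRδ)
    have hd0 : 0 ≤ d := dist_nonneg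
    -- the path
    set f : ℝ → X := fun t =>
      if t ≤ 1/3 then γ₁ (R + 3*δ*t) else if t ≤ 2/3 then σ (d*(3*t-1))
      else γ₂ (R + 3*δ*(1-t)) with hf
    set K : ℝ≥0 := (3*δ).toNNReal with hK
    have hKc : (K : ℝ) = 3*δ := Real.coe_toNNReal _ (by positivity)
    -- value descriptions on each interval
    have he1 : ∀ t ∈ Icc (0:ℝ) (1/3), f t = γ₁ (R + 3*δ*t) := by
      intro t ht; simp only [hf, if_pos ht.2]
    have he2 : ∀ t ∈ Icc (1/3:ℝ) (2/3), f t = σ (d*(3*t-1)) := by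
      intro t ht
      rcases lt_or_ge (1/3:ℝ) t with h | h
      · simp only [hf, if_neg (not_le.2 h), if_pos ht.2]
      · have htt : t = 1/3 := le_antisymm h ht.1
        subst htt
        simp only [hf, if_pos (le_refl _)]
        have h0 : d*(3*(1/3:ℝ)-1) = 0 := by ring
        have h1 : R + 3*δ*(1/3:ℝ) = R + δ := by ring
        rw [h0, h1, hσ.1]
    have he3 : ∀ t ∈ Icc (2/3:ℝ) 1, f t = γ₂ (R + 3*δ*(1-t)) := by
      intro t ht
      rcases lt_or_ge (2/3:ℝ) t with h | h
      · have h' : ¬ t ≤ 1/3 := by intro hh; linarith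
        simp only [hf, if_neg h', if_neg (not_le.2 h)]
      · have htt : t = 2/3 := le_antisymm h ht.1
        subst htt
        have h' : ¬ (2/3:ℝ) ≤ 1/3 := by norm_num
        simp only [hf, if_neg h', if_pos (le_refl _)]
        have h0 : d * (3 * (2/3:ℝ) - 1) = dist u v := by rw [← hd]; ring
        have h1 : R + 3*δ*(1-(2/3:ℝ)) = R + δ := by ring
        rw [h0, hσ.2.1, h1]
    -- Lipschitz on each piece
    have harg1 : ∀ t ∈ Icc (0:ℝ) (1/3), R + 3*δ*t ∈ Icc (0:ℝ) (dist p a) := by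
      intro t ht
      constructor
      · nlinarith [ht.1]
      · nlinarith [ht.2, ht.1]
    have harg2 : ∀ t ∈ Icc (1/3:ℝ) (2/3), d*(3*t-1) ∈ Icc (0:ℝ) (dist u v) := by
      intro t ht
      constructor
      · nlinarith [ht.1]
      · rw [← hd]; nlinarith [ht.2]
    have harg3 : ∀ t ∈ Icc (2/3:ℝ) 1, R + 3*δ*(1-t) ∈ Icc (0:ℝ) (dist p a) := by
      intro t ht
      constructor
      · nlinarith [ht.2]
      · nlinarith [ht.1, ht.2]
    have hl1 : LipschitzOnWith K f (Icc 0 (1/3)) := by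
      rw [lipschitzOnWith_iff_dist_le_mul]
      intro s hs t ht
      rw [he1 s hs, he1 t ht, hγ₁.2.2 _ (harg1 s hs) _ (harg1 t ht), hKc, Real.dist_eq]
      have : R + 3*δ*s - (R + 3*δ*t) = 3*δ*(s - t) := by ring
      rw [this, abs_mul, abs_of_nonneg (by positivity : (0:ℝ) ≤ 3*δ)]
    have hl2 : LipschitzOnWith K f (Icc (1/3) (2/3)) := by
      rw [lipschitzOnWith_iff_dist_le_mul]
      intro s hs t ht
      rw [he2 s hs, he2 t ht, hσ.2.2 _ (harg2 s hs) _ (harg2 t ht), hKc, Real.dist_eq]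
      have : d*(3*s-1) - d*(3*t-1) = 3*d*(s-t) := by ring
      rw [this, abs_mul, abs_of_nonneg (by positivity : (0:ℝ) ≤ 3*d)]
      gcongr
    have hl3 : LipschitzOnWith K f (Icc (2/3) 1) := by
      rw [lipschitzOnWith_iff_dist_le_mul]
      intro s hs t ht
      rw [he3 s hs, he3 t ht, hγ₂.2.2 _ (harg3 s hs) _ (harg3 t ht), hKc, Real.dist_eq]
      have h1 : R + 3*δ*(1-s) - (R + 3*δ*(1-t)) = 3*δ*(t - s) := by ring
      rw [h1, abs_mul, abs_of_nonneg (by positivity : (0:ℝ) ≤ 3*δ), abs_sub_comm]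
    have hlip : LipschitzOnWith K f (Icc 0 1) :=
      lip_glue (by norm_num) (by norm_num)
        (lip_glue (by norm_num) (by norm_num) hl1 hl2) hl3
    -- membership of f in the admissible set
    have hmem : f ∈ {γ : ℝ → X | ContinuousOn γ (Icc 0 1) ∧ γ 0 = x ∧ γ 1 = y ∧
        ∀ t ∈ Icc (0:ℝ) 1, R ≤ dist (γ t) p} := by
      refine ⟨hlip.continuousOn, ?_, ?_, ?_⟩
      · rw [he1 0 (by norm_num), ← hxt, hT1]
        have h1 : R + 3*δ*0 = R := by ring
        rw [h1]
      · rw [he3 1 (by norm_num), ← hyt, hT2]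
        have h1 : R + 3*δ*(1-1) = R := by ring
        rw [h1]
      · intro t ht
        rcases le_or_gt t (1/3) with h | h
        · rw [he1 t ⟨ht.1, h⟩, geod_param hγ₁ (harg1 t ⟨ht.1, h⟩)]
          nlinarith [ht.1]
        rcases le_or_gt t (2/3) with h' | h'
        · rw [he2 t ⟨h.le, h'⟩]
          have hds : dist (σ (d*(3*t-1))) u = d*(3*t-1) :=
            geod_param hσ (harg2 t ⟨h.le, h'⟩)
          have hup : dist u p = R + δ := geod_param hγ₁ hmemRδ
          have htri := dist_triangle u (σ (d*(3*t-1))) p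
          rw [dist_comm u (σ (d*(3*t-1)))] at htri
          have hbd : d*(3*t-1) ≤ d*1 := mul_le_mul_of_nonneg_left (by linarith) hd0
          linarith
        · rw [he3 t ⟨h'.le, ht.2⟩, geod_param hγ₂ (harg3 t ⟨h'.le, ht.2⟩)]
          nlinarith [ht.2]
    calc pathDist p R x y ≤ eVariationOn f (Icc (0:ℝ) 1) := iInf₂_le f hmem
      _ ≤ (K : ℝ≥0∞) := evar_lip hlip
      _ ≤ ENNReal.ofReal (4*δ) := by
          rw [← ENNReal.ofReal_coe_nnreal, hKc]
          exact ENNReal.ofReal_le_ofReal (by linarith)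
  refine ⟨iSup₂_le fun x hx => iSup₂_le fun y hy => key x hx y hy, ?_⟩
  intro θ hθ
  rw [projDist, union_self]
  exact le_trans (iSup₂_le fun x hx => iSup₂_le fun y hy => key x hx y hy)
    (ENNReal.ofReal_le_ofReal hθ)
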